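/- Let q ≥ 1 and let k : [0,1]×[0,1] → ℝ be a continuous kernel of rank exactly q, i.e. k(s,t) = Σ_{m=1}^{q} λ_m φ_m(s)φ_m(t) with λ_1,…,λ_q > 0 and φ_1,…,φ_q : [0,1] → ℝ continuous and orthonormal in L²([0,1]). Then there exists a natural number L† such that for every L > L†, for every regular grid t_1,…,t_L ∈ [0,1], and for every L×L real matrix Θ with rank(Θ) ≤ q: if Θ_{ij} = k(t_i,t_j) for all pairs i ≠ j, then Θ_{ii} = k(t_i,t_i) for all i as well, i.e. Θ equals the matrix K_{X,L} with entries k(t_i,t_j). Equivalently, K_{X,L} is the unique matrix of rank at most q at which the functional Θ ↦ Σ_{i≠j} (k(t_i,t_j) − Θ_{ij})² vanishes. -/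

import Mathlib

open MeasureTheory

open Matrix

lemma riemann_close {f : ℝ → ℝ} (hf : ContinuousOn f (Set.Icc 0 1))
    {ε : ℝ} (hε : 0 < ε) :
    ∃ L₀ : ℕ, ∀ L : ℕ, L₀ < L → ∀ t : Fin L → ℝ,
      (∀ j : Fin L, (j : ℝ) / L ≤ t j ∧ t j < ((j : ℝ) + 1) / L) →
      |(∑ j, f (t j)) / L - ∫ x in (0:ℝ)..1, f x| ≤ ε := by
  have huc := isCompact_Icc.uniformContinuousOn_of_continuous hf
  rw [Metric.uniformContinuousOn_iff] at huc
  obtain ⟨δ, hδ, hδ'⟩ := huc ε hε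
  refine ⟨⌈1/δ⌉₊, fun L hL t ht => ?_⟩
  have hL0 : 0 < L := lt_of_le_of_lt (Nat.zero_le _) hL
  have hLR : (0:ℝ) < L := by exact_mod_cast hL0
  have hinvL : 1 / (L:ℝ) < δ := by
    have h1 : (1:ℝ)/δ < L := lt_of_le_of_lt (Nat.le_ceil _) (by exact_mod_cast hL)
    rw [div_lt_iff₀ hLR]
    rw [div_lt_iff₀ hδ] at h1
    linarith [mul_comm (L:ℝ) δ]
  have hstep : ∀ n : ℕ, ((n:ℝ)+1)/L - (n:ℝ)/L = 1/L := by intro n; field_simp; ring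
  have hle : ∀ n : ℕ, (n:ℝ)/L ≤ ((n:ℝ)+1)/L := by
    intro n; gcongr; linarith
  have hsub : ∀ n : ℕ, n < L → Set.Icc ((n:ℝ)/L) (((n:ℝ)+1)/L) ⊆ Set.Icc 0 1 := by
    intro n hn
    apply Set.Icc_subset_Icc
    · positivity
    · rw [div_le_one hLR]; exact_mod_cast hn
  have hint : ∀ n : ℕ, n < L → IntervalIntegrable f volume ((n:ℝ)/L) (((n:ℝ)+1)/L) := by
    intro n hn
    exact (hf.mono ((Set.uIcc_of_le (hle n)).symm ▸ hsub n hn : Set.uIcc _ _ ⊆ _)).intervalIntegrable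
  have hint' : ∀ n : ℕ, n < L → IntervalIntegrable f volume ((n:ℝ)/L) ((↑(n+1):ℝ)/L) := by
    intro n hn; push_cast; exact hint n hn
  have hsplit : ∑ k ∈ Finset.range L, ∫ x in ((k:ℝ)/L)..(((k:ℝ)+1)/L), f x
      = ∫ x in (0:ℝ)..1, f x := by
    have := intervalIntegral.sum_integral_adjacent_intervals
      (a := fun n : ℕ => (n:ℝ)/L) (n := L) (μ := volume) (f := f) (fun k hk => hint' k hk)
    simp only [Nat.cast_zero, zero_div] at this
    rw [div_self (ne_of_gt hLR)] at this
    rw [← this]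
    apply Finset.sum_congr rfl
    intro k _
    congr 1
    push_cast; ring
  have htmem : ∀ j : Fin L, t j ∈ Set.Icc (0:ℝ) 1 := by
    intro j
    constructor
    · exact le_trans (by positivity) (ht j).1
    · refine le_of_lt (lt_of_lt_of_le (ht j).2 ?_)
      rw [div_le_one hLR]
      exact_mod_cast Nat.succ_le_of_lt j.2
  have key : ∀ j : Fin L, |f (t j) / L - ∫ x in ((j:ℝ)/L)..(((j:ℝ)+1)/L), f x| ≤ ε / L := by
    intro j
    have hj : (j:ℕ) < L := j.2
    have hdiff : f (t j) / L - ∫ x in ((j:ℝ)/L)..(((j:ℝ)+1)/L), f x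
        = ∫ x in ((j:ℝ)/L)..(((j:ℝ)+1)/L), (f (t j) - f x) := by
      rw [intervalIntegral.integral_sub intervalIntegrable_const (hint _ hj),
        intervalIntegral.integral_const, smul_eq_mul, hstep (j:ℕ)]
      ring
    have hb : ∀ x ∈ Set.uIoc ((j:ℝ)/L) (((j:ℝ)+1)/L), ‖f (t j) - f x‖ ≤ ε := by
      intro x hx
      rw [Set.uIoc_of_le (hle (j:ℕ))] at hx
      have hxI : x ∈ Set.Icc (0:ℝ) 1 := hsub _ hj (Set.Ioc_subset_Icc_self hx)
      have hdist : dist (t j) x < δ := by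
        rw [Real.dist_eq, abs_sub_lt_iff]
        have h1 := (ht j).1
        have h2 := (ht j).2
        have h3 := hx.1
        have h4 := hx.2
        have h5 := hstep (j:ℕ)
        constructor <;> [linarith; linarith]
      exact le_of_lt (by rw [Real.norm_eq_abs, ← Real.dist_eq]; exact hδ' (t j) (htmem j) x hxI hdist)
    have hnorm := intervalIntegral.norm_integral_le_of_norm_le_const hb
    have habs : |((j:ℝ)+1)/L - (j:ℝ)/L| = 1/L := by
      rw [hstep (j:ℕ), abs_of_nonneg (by positivity)]
    rw [hdiff]
    calc |∫ x in ((j:ℝ)/L)..(((j:ℝ)+1)/L), (f (t j) - f x)| ≤ ε * (1/L) := by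
          rw [← habs]; exact hnorm
    _ = ε / L := by ring
  calc |(∑ j, f (t j)) / L - ∫ x in (0:ℝ)..1, f x|
      = |∑ j : Fin L, (f (t j) / L - ∫ x in ((j:ℝ)/L)..(((j:ℝ)+1)/L), f x)| := by
        rw [Finset.sum_sub_distrib, ← Finset.sum_div]
        congr 1
        rw [← hsplit, Fin.sum_univ_eq_sum_range (fun n => ∫ x in ((n:ℝ)/L)..(((n:ℝ)+1)/L), f x) L]
    _ ≤ ∑ j : Fin L, |f (t j) / L - ∫ x in ((j:ℝ)/L)..(((j:ℝ)+1)/L), f x| :=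
        Finset.abs_sum_le_sum_abs _ _
    _ ≤ ∑ _j : Fin L, ε / L := Finset.sum_le_sum (fun j _ => key j)
    _ = L * (ε / L) := by rw [Finset.sum_const]; simp [Finset.card_univ]
    _ = ε := by field_simp


-- near-identity matrices have nonzero determinant
lemma det_ne_zero_of_near_id {q : ℕ} (hq : 1 ≤ q) (A : Matrix (Fin q) (Fin q) ℝ)
    {η : ℝ} (hη : (q:ℝ) * η < 1)
    (hA : ∀ a b, |A a b - if a = b then 1 else 0| ≤ η) : A.det ≠ 0 := by
  intro hdet
  obtain ⟨x, hx0, hx⟩ := (Matrix.exists_mulVec_eq_zero_iff).mpr hdet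
  -- pick index with maximal |x a|
  obtain ⟨a, -, ha⟩ := Finset.exists_max_image (Finset.univ : Finset (Fin q))
    (fun b => |x b|) ⟨⟨0, hq⟩, Finset.mem_univ _⟩
  have hxa : 0 < |x a| := by
    rcases (Function.ne_iff).mp hx0 with ⟨b, hb⟩
    exact lt_of_lt_of_le (abs_pos.mpr hb) (ha b (Finset.mem_univ b))
  have h0 : A.mulVec x a = 0 := congrFun hx a
  rw [Matrix.mulVec, dotProduct] at h0
  have hsplit : ∑ b, A a b * x b
      = x a + ∑ b, (A a b - if a = b then 1 else 0) * x b := by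
    have : ∀ b, (A a b - if a = b then 1 else 0) * x b
        = A a b * x b - (if a = b then 1 else 0) * x b := fun b => by ring
    simp only [this, Finset.sum_sub_distrib]
    have : ∑ b, (if a = b then (1:ℝ) else 0) * x b = x a := by
      simp [Finset.sum_ite_eq]
    rw [this]; ring
  have hxa' : |x a| ≤ (q:ℝ) * η * |x a| := by
    have h1 : x a = -(∑ b, (A a b - if a = b then 1 else 0) * x b) := by
      rw [hsplit] at h0; linarith
    calc |x a| = |∑ b, (A a b - if a = b then 1 else 0) * x b| := by rw [h1, abs_neg]
    _ ≤ ∑ b, |(A a b - if a = b then 1 else 0) * x b| := Finset.abs_sum_le_sum_abs _ _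
    _ ≤ ∑ _b : Fin q, η * |x a| := by
        apply Finset.sum_le_sum
        intro b _
        rw [abs_mul]
        exact mul_le_mul (hA a b) (ha b (Finset.mem_univ b)) (abs_nonneg _)
          (le_trans (abs_nonneg _) (hA a b))
    _ = (q:ℝ) * (η * |x a|) := by rw [Finset.sum_const]; simp [Finset.card_univ]
    _ = (q:ℝ) * η * |x a| := by ring
  nlinarith

-- rank of arbitrary submatrix
lemma rank_submatrix_le' {L p : ℕ} (A : Matrix (Fin L) (Fin L) ℝ)
    (f g : Fin p → Fin L) : (A.submatrix f g).rank ≤ A.rank := by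
  classical
  set P : Matrix (Fin p) (Fin L) ℝ := Matrix.of fun a j => if j = f a then 1 else 0 with hP
  set Q : Matrix (Fin L) (Fin p) ℝ := Matrix.of fun j b => if j = g b then 1 else 0 with hQ
  have hAQ : ∀ j b, (A * Q) j b = A j (g b) := by
    intro j b
    simp [Matrix.mul_apply, hQ, Finset.sum_ite_eq]
  have key : A.submatrix f g = P * (A * Q) := by
    ext a b
    simp [Matrix.mul_apply, hP, hAQ, Finset.sum_ite_eq]
  rw [key]
  exact le_trans (Matrix.rank_mul_le_right P (A * Q)) (Matrix.rank_mul_le_left A Q)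


lemma exists_invertible_rows {q L : ℕ} (v : Fin L → (Fin q → ℝ))
    (hspan : Submodule.span ℝ (Set.range v) = ⊤)
    (F : Finset (Fin L)) (hF : ∀ j ∈ F, v j = 0) :
    ∃ e : Fin q → Fin L, Function.Injective e ∧ (∀ m, e m ∉ F) ∧
      (Matrix.of fun a b => v (e a) b).det ≠ 0 := by
  classical
  obtain ⟨b, hbsub, hbspan, hbli⟩ := exists_linearIndependent ℝ (Set.range v)
  have hfin : b.Finite := hbli.setFinite
  haveI : Fintype b := hfin.fintype
  let B : Module.Basis b ℝ (Fin q → ℝ) := Module.Basis.mk hbli (by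
    rw [Subtype.range_coe, hbspan, hspan])
  have hcard : Fintype.card b = q := by
    have h1 := Module.finrank_eq_card_basis B
    rw [Module.finrank_fintype_fun_eq_card, Fintype.card_fin] at h1
    omega
  let f : Fin q ≃ b := (Fintype.equivFinOfCardEq hcard).symm
  have hmem : ∀ x : b, ∃ j, v j = (x : Fin q → ℝ) := fun x => hbsub x.2
  choose g hg using hmem
  refine ⟨g ∘ f, ?_, ?_, ?_⟩
  · intro m₁ m₂ h
    have : v (g (f m₁)) = v (g (f m₂)) := by rw [show g (f m₁) = g (f m₂) from h]
    rw [hg, hg] at this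
    exact f.injective (Subtype.ext this)
  · intro m hmF
    have h0 : v (g (f m)) = 0 := hF _ hmF
    rw [hg] at h0
    exact hbli.ne_zero (f m) h0
  · intro hdet
    obtain ⟨y, hy0, hy⟩ := Matrix.exists_vecMul_eq_zero_iff.mpr hdet
    have hli := hbli.comp f f.injective
    rw [Fintype.linearIndependent_iff] at hli
    have hcomb : ∀ a : Fin q, y a = 0 := by
      apply hli
      funext bb
      have := congrFun hy bb
      rw [Matrix.vecMul, dotProduct] at this
      simpa [hg, Finset.sum_apply] using this
    exact hy0 (funext hcomb)

lemma det_single_perturb {q : ℕ} (N : Matrix (Fin (q+1)) (Fin (q+1)) ℝ) (d : ℝ) :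
    (N.updateRow 0 (fun b => N 0 b + d * (if b = 0 then 1 else 0))).det
      = N.det + d * (N.submatrix Fin.succ Fin.succ).det := by
  set v : Fin (q+1) → ℝ := Pi.single 0 1 with hv
  have hrow : (fun b : Fin (q+1) => N 0 b + d * (if b = 0 then 1 else 0))
      = N 0 + d • v := by
    funext b
    simp [hv, Pi.single_apply, eq_comm]
  rw [hrow, Matrix.det_updateRow_add, Matrix.det_updateRow_smul, Matrix.updateRow_eq_self]
  congr 2
  rw [Matrix.det_succ_row_zero]
  have hsum := Finset.sum_eq_single (s := Finset.univ) (0 : Fin (q+1))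
    (f := fun j : Fin (q+1) => (-1 : ℝ)^(j:ℕ) * (N.updateRow 0 v) 0 j *
      ((N.updateRow 0 v).submatrix Fin.succ j.succAbove).det)
    (fun j _ hj => by simp [Matrix.updateRow_self, hv, Pi.single_eq_of_ne hj])
    (fun h => absurd (Finset.mem_univ _) h)
  rw [hsum]
  simp only [Matrix.updateRow_self, hv, Pi.single_eq_same, Fin.val_zero, pow_zero, one_mul, mul_one]
  rw [Fin.succAbove_zero]
  congr 1


lemma gram_to_submatrix {q L : ℕ} (hq : 1 ≤ q) (hL : 0 < L)
    (w : Fin L → Fin q → ℝ) (F : Finset (Fin L))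
    (hgram : ∀ a b : Fin q,
      |(∑ j ∈ Fᶜ, w j a * w j b) / L - if a = b then 1 else 0| ≤ 1/(2*q)) :
    ∃ e : Fin q → Fin L, Function.Injective e ∧ (∀ m, e m ∉ F) ∧
      (Matrix.of fun a m => w (e a) m).det ≠ 0 := by
  classical
  have hLR : (0:ℝ) < L := by exact_mod_cast hL
  have hqR : (0:ℝ) < q := by exact_mod_cast hq
  set w' : Fin L → Fin q → ℝ := fun j => if j ∈ F then 0 else w j with hw'
  set Φ : Matrix (Fin L) (Fin q) ℝ := Matrix.of w' with hΦ
  set G : Matrix (Fin q) (Fin q) ℝ := Φᵀ * Φ with hG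
  have hGab : ∀ a b, G a b = ∑ j ∈ Fᶜ, w j a * w j b := by
    intro a b
    rw [hG, Matrix.mul_apply]
    have h1 : ∀ j, Φᵀ a j * Φ j b = if j ∈ Fᶜ then w j a * w j b else 0 := by
      intro j
      by_cases hj : j ∈ F <;>
        simp [Matrix.transpose_apply, hΦ, hw', hj, Finset.mem_compl]
    simp only [h1]
    rw [Finset.sum_ite_mem, Finset.univ_inter]
  set A : Matrix (Fin q) (Fin q) ℝ := (L:ℝ)⁻¹ • G with hA'
  have hAab : ∀ a b, |A a b - if a = b then 1 else 0| ≤ 1/(2*q) := by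
    intro a b
    have : A a b = (∑ j ∈ Fᶜ, w j a * w j b) / L := by
      rw [hA', Matrix.smul_apply, smul_eq_mul, hGab, inv_mul_eq_div]
    rw [this]
    exact hgram a b
  have hdetA : A.det ≠ 0 := by
    apply det_ne_zero_of_near_id hq A (η := 1/(2*q)) _ hAab
    rw [mul_one_div]
    rw [div_lt_one (by positivity)]
    linarith
  have hGA : G = (L:ℝ) • A := by
    rw [hA', smul_smul, mul_inv_cancel₀ (ne_of_gt hLR), one_smul]
  have hdetG : G.det ≠ 0 := by
    rw [hGA, Matrix.det_smul]
    exact mul_ne_zero (pow_ne_zero _ (ne_of_gt hLR)) hdetA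
  have hrg : G.rank = q := by
    rw [Matrix.rank_of_isUnit G ((Matrix.isUnit_iff_isUnit_det G).mpr
      (isUnit_iff_ne_zero.mpr hdetG))]
    exact Fintype.card_fin q
  have hrΦt : Φᵀ.rank = q := by
    rw [Matrix.rank_transpose, ← Matrix.rank_transpose_mul_self, ← hG]
    exact hrg
  have hspan : Submodule.span ℝ (Set.range w') = ⊤ := by
    apply Submodule.eq_top_of_finrank_eq
    have h2 := Matrix.rank_eq_finrank_span_cols Φᵀ
    change _ = Module.finrank ℝ (Submodule.span ℝ (Set.range w')) at h2
    rw [Module.finrank_fintype_fun_eq_card, Fintype.card_fin]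
    rw [h2] at hrΦt
    exact hrΦt
  obtain ⟨e, hinj, hnF, hdet⟩ := exists_invertible_rows w' hspan F (fun j hj => by
    simp [hw', hj])
  refine ⟨e, hinj, hnF, ?_⟩
  have : (Matrix.of fun a m => w (e a) m) = (Matrix.of fun a b => w' (e a) b) := by
    ext a b
    simp [hw', hnF a]
  rw [this]
  exact hdet

lemma det_submatrix_eq_zero_of_rank_le {L p qq : ℕ} (A : Matrix (Fin L) (Fin L) ℝ)
    (h : A.rank ≤ qq) (hp : qq < p) (f g : Fin p → Fin L) :
    (A.submatrix f g).det = 0 := by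
  by_contra hdet
  have h1 : (A.submatrix f g).rank = p := by
    rw [Matrix.rank_of_isUnit _ ((Matrix.isUnit_iff_isUnit_det _).mpr
      (isUnit_iff_ne_zero.mpr hdet))]
    exact Fintype.card_fin p
  have h2 := rank_submatrix_le' A f g
  omega


/-- Let `k` be a continuous kernel on `[0,1]²` of rank exactly `q ≥ 1`
(finite Mercer expansion with `q` terms, positive eigenvalues, continuous orthonormal
eigenfunctions). Then there is a critical grid size `L†` such that for every `L > L†`,
every regular grid `t₁,…,t_L`, and every `L × L` matrix `Θ` of rank at most `q` that agrees
with `(k(tᵢ,tⱼ))` off the diagonal, one has `Θ = (k(tᵢ,tⱼ))`: the covariance matrix is the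
unique rank-`≤ q` matrix matching the off-diagonal entries. -/
theorem offdiagonal_identifiability_of_rank_eq
    (q : ℕ) (hq : 1 ≤ q) (k : ℝ → ℝ → ℝ) (lam : Fin q → ℝ) (φ : Fin q → ℝ → ℝ)
    (hk : ContinuousOn (fun p : ℝ × ℝ => k p.1 p.2) (Set.Icc 0 1 ×ˢ Set.Icc 0 1))
    (hlam : ∀ m, 0 < lam m)
    (hφ : ∀ m, ContinuousOn (φ m) (Set.Icc 0 1))
    (hortho : ∀ i j, (∫ x in (0:ℝ)..1, φ i x * φ j x) = if i = j then 1 else 0)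
    (hdecomp : ∀ s ∈ Set.Icc (0:ℝ) 1, ∀ t ∈ Set.Icc (0:ℝ) 1,
      k s t = ∑ m, lam m * φ m s * φ m t) :
    ∃ Ldagger : ℕ, ∀ L : ℕ, Ldagger < L → ∀ t : Fin L → ℝ,
      (∀ j : Fin L, (j : ℝ) / L ≤ t j ∧ t j < ((j : ℝ) + 1) / L) →
      ∀ Θ : Matrix (Fin L) (Fin L) ℝ, Θ.rank ≤ q →
        (∀ i j, i ≠ j → Θ i j = k (t i) (t j)) →
        Θ = Matrix.of fun i j => k (t i) (t j) := by
  classical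
  have hqR : (1:ℝ) ≤ q := by exact_mod_cast hq
  -- uniform bound on the eigenfunctions
  have hbound : ∃ M : ℝ, 0 ≤ M ∧ ∀ m, ∀ x ∈ Set.Icc (0:ℝ) 1, |φ m x| ≤ M := by
    have h1 : ∀ m : Fin q, ∃ C, ∀ x ∈ Set.Icc (0:ℝ) 1, ‖φ m x‖ ≤ C :=
      fun m => isCompact_Icc.exists_bound_of_continuousOn (hφ m)
    choose C hC using h1
    refine ⟨max 0 (Finset.univ.sup' (by simp [Finset.univ_nonempty_iff]; exact Fin.pos_iff_nonempty.mp hq) C),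
      le_max_left _ _, fun m x hx => ?_⟩
    refine le_trans (hC m x hx) (le_trans ?_ (le_max_right _ _))
    exact Finset.le_sup' C (Finset.mem_univ m)
  obtain ⟨M, hM0, hM⟩ := hbound
  -- Riemann sum control, uniform over regular grids, for each pair of eigenfunctions
  have hε : (0:ℝ) < 1/(4*q) := by positivity
  have hpair : ∀ p : Fin q × Fin q, ∃ L₀ : ℕ, ∀ L : ℕ, L₀ < L → ∀ t : Fin L → ℝ,
      (∀ j : Fin L, (j : ℝ) / L ≤ t j ∧ t j < ((j : ℝ) + 1) / L) →
      |(∑ j, φ p.1 (t j) * φ p.2 (t j)) / L - (if p.1 = p.2 then (1:ℝ) else 0)| ≤ 1/(4*q) := by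
    intro p
    obtain ⟨L₀, hL₀⟩ := riemann_close ((hφ p.1).mul (hφ p.2)) hε
    refine ⟨L₀, fun L hL t ht => ?_⟩
    have := hL₀ L hL t ht
    simp only [Pi.mul_apply] at this
    rwa [hortho p.1 p.2] at this
  choose Lr hLr using hpair
  refine ⟨max (Finset.univ.sup Lr) ⌈4*(q:ℝ)*((q:ℝ)+1)*(M^2+1)⌉₊, fun L hL t ht Θ hrank hoff => ?_⟩
  have hL1 : Finset.univ.sup Lr < L := lt_of_le_of_lt (le_max_left _ _) hL
  have hL2 : ⌈4*(q:ℝ)*((q:ℝ)+1)*(M^2+1)⌉₊ < L := lt_of_le_of_lt (le_max_right _ _) hL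
  have hL0 : 0 < L := lt_of_le_of_lt (Nat.zero_le _) hL
  have hLR : (0:ℝ) < L := by exact_mod_cast hL0
  have hLbig : 4*(q:ℝ)*((q:ℝ)+1)*(M^2+1) ≤ L := by
    refine le_trans (Nat.le_ceil _) ?_
    exact_mod_cast le_of_lt hL2
  have htmem : ∀ j : Fin L, t j ∈ Set.Icc (0:ℝ) 1 := by
    intro j
    constructor
    · exact le_trans (by positivity) (ht j).1
    · refine le_of_lt (lt_of_lt_of_le (ht j).2 ?_)
      rw [div_le_one hLR]
      exact_mod_cast Nat.succ_le_of_lt j.2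
  set w : Fin L → Fin q → ℝ := fun j m => φ m (t j) with hw
  -- existence of well-conditioned submatrices avoiding any small index set
  have good : ∀ F : Finset (Fin L), F.card ≤ q + 1 →
      ∃ e : Fin q → Fin L, Function.Injective e ∧ (∀ m, e m ∉ F) ∧
        (Matrix.of fun a m => w (e a) m).det ≠ 0 := by
    intro F hFcard
    apply gram_to_submatrix hq hL0 w F
    intro a b
    have hfull := hLr (a, b) L (lt_of_le_of_lt (Finset.le_sup (Finset.mem_univ (a,b))) hL1) t ht
    have hsplit : (∑ j ∈ Fᶜ, w j a * w j b)
        = (∑ j, w j a * w j b) - ∑ j ∈ F, w j a * w j b := by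
      rw [eq_sub_iff_add_eq, Finset.sum_compl_add_sum]
    have hFsum : |∑ j ∈ F, w j a * w j b| ≤ ((q:ℝ)+1) * M^2 := by
      calc |∑ j ∈ F, w j a * w j b| ≤ ∑ j ∈ F, |w j a * w j b| := Finset.abs_sum_le_sum_abs _ _
      _ ≤ ∑ _j ∈ F, M^2 := by
          refine Finset.sum_le_sum (fun j _ => ?_)
          rw [abs_mul, sq]
          exact mul_le_mul (hM a (t j) (htmem j)) (hM b (t j) (htmem j)) (abs_nonneg _) hM0
      _ = F.card * M^2 := by rw [Finset.sum_const, nsmul_eq_mul]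
      _ ≤ ((q:ℝ)+1) * M^2 := by
          have : (F.card : ℝ) ≤ (q:ℝ)+1 := by exact_mod_cast hFcard
          nlinarith
    have hFL : |∑ j ∈ F, w j a * w j b| / L ≤ 1/(4*q) := by
      rw [div_le_iff₀ hLR]
      have h2 : ((q:ℝ)+1) * M^2 ≤ 1/(4*q) * L := by
        rw [div_mul_eq_mul_div, le_div_iff₀ (by positivity)]
        nlinarith
      linarith
    calc |(∑ j ∈ Fᶜ, w j a * w j b) / L - if a = b then 1 else 0|
        = |((∑ j, w j a * w j b) / L - if a = b then 1 else 0)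
            - (∑ j ∈ F, w j a * w j b) / L| := by
          rw [hsplit, sub_div]; ring_nf
      _ ≤ |(∑ j, w j a * w j b) / L - if a = b then 1 else 0|
            + |(∑ j ∈ F, w j a * w j b) / L| := abs_sub _ _
      _ ≤ 1/(4*q) + 1/(4*q) := by
          refine add_le_add hfull ?_
          rw [abs_div, abs_of_pos hLR]
          exact hFL
      _ = 1/(2*q) := by field_simp; ring
  -- the kernel matrix on the grid
  set K : Matrix (Fin L) (Fin L) ℝ := Matrix.of (fun i j => k (t i) (t j)) with hK
  have hKentry : ∀ i j, K i j = ∑ m, lam m * w i m * w j m := by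
    intro i j
    exact hdecomp (t i) (htmem i) (t j) (htmem j)
  have hKrank : K.rank ≤ q := by
    have hfac : K = (Matrix.of w) * (Matrix.of fun m j => lam m * w j m) := by
      ext i j
      rw [hKentry i j, Matrix.mul_apply]
      apply Finset.sum_congr rfl
      intro m _
      simp only [Matrix.of_apply]
      ring
    rw [hfac]
    exact le_trans (Matrix.rank_mul_le_right _ _)
      (le_trans (Matrix.rank_le_card_height _) (le_of_eq (Fintype.card_fin q)))
  -- main diagonal identification
  have hdiag : ∀ i, Θ i i = K i i := by
    intro i
    obtain ⟨e₁, he₁inj, he₁F, he₁det⟩ := good {i} (by simp)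
    obtain ⟨e₂, he₂inj, he₂F, he₂det⟩ := good (insert i (Finset.image e₁ Finset.univ)) (by
      refine le_trans (Finset.card_insert_le _ _) ?_
      have := Finset.card_image_le (s := (Finset.univ : Finset (Fin q))) (f := e₁)
      simp only [Finset.card_univ, Fintype.card_fin] at this
      omega)
    have he₁i : ∀ m, e₁ m ≠ i := fun m hm => he₁F m (by simp [hm])
    have he₂i : ∀ m, e₂ m ≠ i := fun m hm => he₂F m (by simp [hm])
    have he₁₂ : ∀ m m', e₂ m ≠ e₁ m' := by
      intro m m' hm
      exact he₂F m (Finset.mem_insert.mpr (Or.inr (Finset.mem_image.mpr ⟨m', Finset.mem_univ _, hm.symm⟩)))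
    set r : Fin (q+1) → Fin L := Fin.cons i e₁ with hr
    set c : Fin (q+1) → Fin L := Fin.cons i e₂ with hc
    have hrc : ∀ a b, r a = c b → a = 0 ∧ b = 0 := by
      intro a b h
      rcases Fin.eq_zero_or_eq_succ a with ha | ⟨a', rfl⟩ <;>
        rcases Fin.eq_zero_or_eq_succ b with hb | ⟨b', rfl⟩
      · exact ⟨ha, hb⟩
      · subst ha
        rw [hr, hc] at h
        simp only [Fin.cons_zero, Fin.cons_succ] at h
        exact absurd h.symm (he₂i b')
      · subst hb
        rw [hr, hc] at h
        simp only [Fin.cons_zero, Fin.cons_succ] at h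
        exact absurd h (he₁i a')
      · rw [hr, hc] at h
        simp only [Fin.cons_succ] at h
        exact absurd h.symm (he₁₂ b' a')
    set d : ℝ := Θ i i - K i i with hd
    set N : Matrix (Fin (q+1)) (Fin (q+1)) ℝ := K.submatrix r c with hN
    have hMm : Θ.submatrix r c
        = N.updateRow 0 (fun b => N 0 b + d * (if b = 0 then 1 else 0)) := by
      ext a b
      by_cases ha : a = 0
      · subst ha
        rw [Matrix.updateRow_self]
        by_cases hb : b = 0
        · subst hb
          simp only [hN, Matrix.submatrix_apply, hr, hc, Fin.cons_zero, hd, if_true,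
            eq_self_iff_true]
          ring
        · simp only [hN, Matrix.submatrix_apply, if_neg hb, mul_zero, add_zero,
            Matrix.submatrix_apply]
          have : r 0 ≠ c b := fun h => hb (hrc 0 b h).2
          exact hoff _ _ this
      · rw [Matrix.updateRow_ne ha]
        simp only [hN, Matrix.submatrix_apply]
        have : r a ≠ c b := fun h => ha (hrc a b h).1
        exact hoff _ _ this
    have hdetM : (Θ.submatrix r c).det = 0 :=
      det_submatrix_eq_zero_of_rank_le Θ hrank (Nat.lt_succ_self q) r c
    have hdetN : N.det = 0 :=
      det_submatrix_eq_zero_of_rank_le K hKrank (Nat.lt_succ_self q) r c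
    have hminor : (N.submatrix Fin.succ Fin.succ)
        = (Matrix.of fun a m => w (e₁ a) m) * Matrix.diagonal lam
            * (Matrix.of fun b m => w (e₂ b) m)ᵀ := by
      ext a b
      rw [Matrix.submatrix_apply, hN, Matrix.submatrix_apply]
      have hra : r (Fin.succ a) = e₁ a := by rw [hr]; simp [Fin.cons_succ]
      have hcb : c (Fin.succ b) = e₂ b := by rw [hc]; simp [Fin.cons_succ]
      rw [hra, hcb, hKentry]
      rw [Matrix.mul_apply]
      apply Finset.sum_congr rfl
      intro m _
      rw [Matrix.mul_diagonal]
      simp only [Matrix.of_apply, Matrix.transpose_apply]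
      ring
    have hminor_det : (N.submatrix Fin.succ Fin.succ).det ≠ 0 := by
      rw [hminor, Matrix.det_mul, Matrix.det_mul, Matrix.det_diagonal, Matrix.det_transpose]
      refine mul_ne_zero (mul_ne_zero he₁det ?_) he₂det
      exact ne_of_gt (Finset.prod_pos (fun m _ => hlam m))
    have hexp := det_single_perturb N d
    rw [← hMm, hdetM, hdetN, zero_add] at hexp
    have hd0 : d = 0 := by
      rcases mul_eq_zero.mp hexp.symm with h | h
      · exact h
      · exact absurd h hminor_det
    rw [hd] at hd0
    linarith
  ext i j
  by_cases hij : i = j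
  · subst hij
    exact hdiag i
  · exact hoff i j hij
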